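/- Fix σ > 0, γ > 0 and d ≥ 0 with d² > σ² and d² ≥ σ²/2 + γ/4. Let Δ = σ⁴ + 4γ·(d² − σ²) and w₁ = (−σ² + √Δ)/(4·(d² − σ²)). Then w₁ ∈ (0, 1] and w₁ is a global minimizer of g_d(w) = w(1 − w)·σ² + w²·d² − (γ/2)·ln w over (0, 1]. -/
import Mathlib


/-- For a sufficiently unique user (`d² > σ²` and `d² ≥ σ²/2 + γ/4`), the
interior critical point `w₁ = (−σ² + √Δ)/(4(d² − σ²))` with
`Δ = σ⁴ + 4γ(d² − σ²)` lies in `(0, 1]` and globally minimizes the expected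
utility loss `g_d(w) = w(1 − w)σ² + w²d² − (γ/2)·ln w` over `(0, 1]`. -/
theorem interior_minimizer (σ γ d w₁ : ℝ) (hσ : 0 < σ) (hγ : 0 < γ) (hd : 0 ≤ d)
    (h1 : d ^ 2 > σ ^ 2) (h2 : d ^ 2 ≥ σ ^ 2 / 2 + γ / 4)
    (hw₁ : w₁ = (-σ ^ 2 + Real.sqrt (σ ^ 4 + 4 * γ * (d ^ 2 - σ ^ 2)))
      / (4 * (d ^ 2 - σ ^ 2))) :
    w₁ ∈ Set.Ioc (0 : ℝ) 1 ∧
    ∀ w ∈ Set.Ioc (0 : ℝ) 1,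
      w₁ * (1 - w₁) * σ ^ 2 + w₁ ^ 2 * d ^ 2 - γ / 2 * Real.log w₁
        ≤ w * (1 - w) * σ ^ 2 + w ^ 2 * d ^ 2 - γ / 2 * Real.log w := by
  have ha : 0 < d ^ 2 - σ ^ 2 := by linarith
  have hΔ : (0:ℝ) < σ ^ 4 + 4 * γ * (d ^ 2 - σ ^ 2) := by nlinarith [pow_pos hσ 4]
  set s := Real.sqrt (σ ^ 4 + 4 * γ * (d ^ 2 - σ ^ 2)) with hsdef
  have hs2 : s ^ 2 = σ ^ 4 + 4 * γ * (d ^ 2 - σ ^ 2) := Real.sq_sqrt hΔ.le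
  have hsnn : 0 ≤ s := Real.sqrt_nonneg _
  have hs_gt : σ ^ 2 < s := by nlinarith
  have hw1pos : 0 < w₁ := by
    rw [hw₁]; exact div_pos (by linarith) (by linarith)
  have hs_le : s ≤ σ ^ 2 + 4 * (d ^ 2 - σ ^ 2) := by nlinarith
  have hw1le : w₁ ≤ 1 := by
    rw [hw₁, div_le_one (by linarith)]; linarith
  have hcrit : 2 * (d ^ 2 - σ ^ 2) * w₁ ^ 2 + σ ^ 2 * w₁ = γ / 2 := by
    rw [hw₁]; field_simp; nlinarith
  refine ⟨⟨hw1pos, hw1le⟩, ?_⟩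
  rintro w ⟨hw0, hw1'⟩
  have hlog := Real.log_le_sub_one_of_pos (show 0 < w / w₁ by positivity)
  rw [Real.log_div hw0.ne' hw1pos.ne'] at hlog
  have hmul : w₁ * (Real.log w - Real.log w₁) ≤ w - w₁ := by
    have h := mul_le_mul_of_nonneg_left hlog hw1pos.le
    have : w₁ * (w / w₁ - 1) = w - w₁ := by field_simp
    linarith
  have hkey : γ / 2 * (Real.log w - Real.log w₁)
      ≤ (2 * (d ^ 2 - σ ^ 2) * w₁ + σ ^ 2) * (w - w₁) := by
    have h := mul_le_mul_of_nonneg_left hmul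
      (show (0:ℝ) ≤ 2 * (d ^ 2 - σ ^ 2) * w₁ + σ ^ 2 by nlinarith)
    have heq : (2 * (d ^ 2 - σ ^ 2) * w₁ + σ ^ 2) * (w₁ * (Real.log w - Real.log w₁))
        = γ / 2 * (Real.log w - Real.log w₁) := by
      linear_combination (Real.log w - Real.log w₁) * hcrit
    linarith [h, heq.ge, heq.le]
  nlinarith [hkey, sq_nonneg (w - w₁), ha, mul_nonneg ha.le (sq_nonneg (w - w₁))]
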